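/- In a graph of maximum degree at most d, for any vertex v and any positive integer m, the number of subtrees of the graph on m vertices containing v is at most (e·d)^(m-1). -/

import Mathlib

open Finset
set_option linter.unusedSectionVars false
namespace Stmt3Aux
variable {V : Type*} [Fintype V] [DecidableEq V] [LinearOrder V]

def cand (G : SimpleGraph V) [DecidableRel G.Adj] (S A : Finset V) : Finset V :=
  (S \ A).filter (fun w => ∃ u ∈ A, G.Adj u w)

def explore (G : SimpleGraph V) [DecidableRel G.Adj] (S : Finset V) (v : V) : ℕ → Finset V
  | 0 => {v}
  | (k+1) => insert (WithTop.untopD v ((cand G S (explore G S v k)).min)) (explore G S v k)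

def seqv (G : SimpleGraph V) [DecidableRel G.Adj] (S : Finset V) (v : V) : ℕ → V
  | 0 => v
  | (k+1) => WithTop.untopD v ((cand G S (explore G S v k)).min)

variable {G : SimpleGraph V} [DecidableRel G.Adj] {S : Finset V} {v : V}

lemma cand_subset {A : Finset V} : cand G S A ⊆ S \ A := filter_subset _ _

lemma next_mem {A : Finset V} (h : (cand G S A).Nonempty) :
    WithTop.untopD v ((cand G S A).min) ∈ cand G S A := by
  rw [← Finset.coe_min' h]; exact Finset.min'_mem _ h

lemma next_eq {A : Finset V} (h : ¬ (cand G S A).Nonempty) :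
    WithTop.untopD v ((cand G S A).min) = v := by
  rw [Finset.not_nonempty_iff_eq_empty] at h; rw [h]; rfl

lemma v_mem_explore : ∀ k, v ∈ explore G S v k
  | 0 => mem_singleton_self v
  | (k+1) => mem_insert_of_mem (v_mem_explore k)

lemma explore_subset (hv : v ∈ S) : ∀ k, explore G S v k ⊆ S
  | 0 => singleton_subset_iff.2 hv
  | (k+1) => by
    apply insert_subset _ (explore_subset hv k)
    by_cases h : (cand G S (explore G S v k)).Nonempty
    · exact (mem_sdiff.1 (cand_subset (next_mem h))).1
    · rw [next_eq h]; exact hv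

lemma explore_mono : Monotone (explore G S v) :=
  monotone_nat_of_le_succ fun _ => subset_insert _ _

lemma seqv_mem_explore : ∀ k, seqv G S v k ∈ explore G S v k
  | 0 => mem_singleton_self v
  | (k+1) => mem_insert_self _ _

lemma explore_eq_image : ∀ k, explore G S v k = (range (k+1)).image (seqv G S v)
  | 0 => by simp [explore, seqv]
  | (k+1) => by
    rw [range_add_one, image_insert, ← explore_eq_image k]; rfl

lemma cand_nonempty (hconn : (G.induce (S : Set V)).Connected) {A : Finset V}
    (hvS : v ∈ S) (hvA : v ∈ A) (hAS : A ⊆ S) (hne : A ≠ S) : (cand G S A).Nonempty := by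
  obtain ⟨w, hwS, hwA⟩ : ∃ w ∈ S, w ∉ A := by
    by_contra hc
    push_neg at hc
    exact hne (subset_antisymm hAS hc)
  obtain ⟨p⟩ := hconn.preconnected ⟨v, hvS⟩ ⟨w, hwS⟩
  obtain ⟨dd, _, h1, h2⟩ := p.exists_boundary_dart {x : ↑(S : Set V) | (x : V) ∈ A} hvA hwA
  refine ⟨(dd.toProd.2 : V), ?_⟩
  simp only [cand, mem_filter, mem_sdiff]
  exact ⟨⟨(dd.toProd.2 : ↑(S : Set V)).2, h2⟩, (dd.toProd.1 : V), h1, dd.adj⟩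

section Main
variable (hconn : (G.induce (S : Set V)).Connected) (hv : v ∈ S)
include hconn hv

lemma card_explore : ∀ k, k < S.card → (explore G S v k).card = k + 1
  | 0, _ => by simp [explore]
  | (k+1), h => by
    have ih := card_explore k (by omega)
    have hne : explore G S v k ≠ S := by
      intro hEq; rw [hEq] at ih; omega
    have hcn := cand_nonempty hconn hv (v_mem_explore k) (explore_subset hv k) hne
    have hnot : WithTop.untopD v ((cand G S (explore G S v k)).min) ∉ explore G S v k :=
      (mem_sdiff.1 (cand_subset (next_mem hcn))).2
    have hrw : explore G S v (k+1)
        = insert (WithTop.untopD v ((cand G S (explore G S v k)).min)) (explore G S v k) := rfl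
    rw [hrw, card_insert_of_notMem hnot, ih]

lemma explore_eq_S : explore G S v (S.card - 1) = S := by
  have h1 : 1 ≤ S.card := card_pos.2 ⟨v, hv⟩
  apply eq_of_subset_of_card_le (explore_subset hv _)
  rw [card_explore hconn hv _ (by omega)]
  omega

lemma seqv_mem_cand {k : ℕ} (hk1 : 1 ≤ k) (hk : k ≤ S.card - 1) :
    seqv G S v k ∈ cand G S (explore G S v (k-1)) := by
  obtain ⟨k, rfl⟩ : ∃ k', k = k' + 1 := ⟨k - 1, by omega⟩
  have h2 : 2 ≤ S.card := by
    have := card_pos.2 (⟨v, hv⟩ : S.Nonempty); omega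
  have hne : explore G S v k ≠ S := by
    intro hEq
    have := card_explore hconn hv k (by omega : k < S.card)
    rw [hEq] at this; omega
  have hcn := cand_nonempty hconn hv (v_mem_explore k) (explore_subset hv k) hne
  simpa [seqv] using next_mem hcn

lemma seqv_injOn {k l : ℕ} (hk : k < S.card) (hl : l < S.card)
    (h : seqv G S v k = seqv G S v l) : k = l := by
  by_contra hne
  wlog hlt : k < l generalizing k l
  · exact this hl hk h.symm (Ne.symm hne) (by omega)
  obtain ⟨l, rfl⟩ : ∃ l', l = l' + 1 := ⟨l - 1, by omega⟩
  have hmem := seqv_mem_cand hconn hv (k := l + 1) (by omega) (by omega)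
  have : seqv G S v (l+1) ∉ explore G S v l := by
    simpa using (mem_sdiff.1 (cand_subset hmem)).2
  apply this
  rw [← h]
  exact explore_mono (by omega : k ≤ l) (seqv_mem_explore k)

end Main

open scoped Classical in
noncomputable def par (G : SimpleGraph V) [DecidableRel G.Adj] (S : Finset V) (v : V)
    (k : ℕ) : ℕ :=
  if h : ∃ j, j < k ∧ G.Adj (seqv G S v j) (seqv G S v k) then Nat.find h else 0

def nbr (G : SimpleGraph V) [DecidableRel G.Adj] (u : V) : List V :=
  (G.neighborFinset u).sort (· ≤ ·)

noncomputable def npos (G : SimpleGraph V) [DecidableRel G.Adj] (S : Finset V) (v : V)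
    (k : ℕ) : ℕ :=
  (nbr G (seqv G S v (par G S v k))).idxOf (seqv G S v k)

noncomputable def code (G : SimpleGraph V) [DecidableRel G.Adj] (S : Finset V) (v : V) :
    Finset (ℕ × ℕ) :=
  (Icc 1 (S.card - 1)).image (fun k => (par G S v k, npos G S v k))

noncomputable def decSet (G : SimpleGraph V) [DecidableRel G.Adj] (v : V)
    (T : Finset (ℕ × ℕ)) (f : ℕ → V) (k : ℕ) : Finset V :=
  (T.filter (fun p => p.1 < k)).image (fun p => (nbr G (f p.1)).getD p.2 v)

lemma decSet_congr {T : Finset (ℕ × ℕ)} {f f' : ℕ → V} {k : ℕ}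
    (h : ∀ j < k, f j = f' j) : decSet G v T f k = decSet G v T f' k := by
  apply image_congr
  intro p hp
  rw [mem_coe, mem_filter] at hp
  dsimp only
  rw [h p.1 hp.2]

section Main2
variable (hconn : (G.induce (S : Set V)).Connected) (hv : v ∈ S)
include hconn hv

lemma par_exists {k : ℕ} (hk1 : 1 ≤ k) (hk : k ≤ S.card - 1) :
    ∃ j, j < k ∧ G.Adj (seqv G S v j) (seqv G S v k) := by
  have hmem := seqv_mem_cand hconn hv hk1 hk
  rw [cand, mem_filter] at hmem
  obtain ⟨-, u, hu, hadj⟩ := hmem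
  rw [explore_eq_image, mem_image] at hu
  obtain ⟨j, hj, rfl⟩ := hu
  rw [mem_range] at hj
  exact ⟨j, by omega, hadj⟩

lemma par_spec {k : ℕ} (hk1 : 1 ≤ k) (hk : k ≤ S.card - 1) :
    par G S v k < k ∧ G.Adj (seqv G S v (par G S v k)) (seqv G S v k) := by
  classical
  rw [par, dif_pos (par_exists hconn hv hk1 hk)]
  exact Nat.find_spec (par_exists hconn hv hk1 hk)

lemma par_min {k j : ℕ} (hk1 : 1 ≤ k) (hk : k ≤ S.card - 1)
    (hj : j < k) (hadj : G.Adj (seqv G S v j) (seqv G S v k)) : par G S v k ≤ j := by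
  classical
  rw [par, dif_pos (par_exists hconn hv hk1 hk)]
  exact Nat.find_min' _ ⟨hj, hadj⟩

lemma seqv_mem_nbr {k : ℕ} (hk1 : 1 ≤ k) (hk : k ≤ S.card - 1) :
    seqv G S v k ∈ nbr G (seqv G S v (par G S v k)) := by
  rw [nbr, Finset.mem_sort, SimpleGraph.mem_neighborFinset]
  exact (par_spec hconn hv hk1 hk).2

lemma decode_id {k : ℕ} (hk1 : 1 ≤ k) (hk : k ≤ S.card - 1) :
    (nbr G (seqv G S v (par G S v k))).getD (npos G S v k) v = seqv G S v k := by
  have hmem := seqv_mem_nbr hconn hv hk1 hk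
  have hlt : npos G S v k < (nbr G (seqv G S v (par G S v k))).length :=
    List.idxOf_lt_length_iff.2 hmem
  rw [List.getD_eq_getElem _ _ hlt]
  exact List.getElem_idxOf hlt

lemma npos_lt {d : ℕ} (hdeg : ∀ w : V, G.degree w ≤ d) {k : ℕ}
    (hk1 : 1 ≤ k) (hk : k ≤ S.card - 1) : npos G S v k < d := by
  have hlt : npos G S v k < (nbr G (seqv G S v (par G S v k))).length :=
    List.idxOf_lt_length_iff.2 (seqv_mem_nbr hconn hv hk1 hk)
  rw [nbr, Finset.length_sort] at hlt
  exact hlt.trans_le (hdeg _)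

lemma code_card : (code G S v).card = S.card - 1 := by
  have h1 : 1 ≤ S.card := card_pos.2 ⟨v, hv⟩
  have hinj : Set.InjOn (fun k => (par G S v k, npos G S v k)) ↑(Icc 1 (S.card - 1)) := by
    intro k hk l hl hkl
    rw [mem_coe, mem_Icc] at hk hl
    apply seqv_injOn hconn hv (show k < S.card by omega) (show l < S.card by omega)
    rw [← decode_id hconn hv hk.1 hk.2, ← decode_id hconn hv hl.1 hl.2]
    have e1 : par G S v k = par G S v l := congrArg Prod.fst hkl
    have e2 : npos G S v k = npos G S v l := congrArg Prod.snd hkl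
    rw [e1, e2]
  rw [code, card_image_of_injOn hinj, Nat.card_Icc]
  omega

lemma code_subset {d : ℕ} (hdeg : ∀ w : V, G.degree w ≤ d) :
    code G S v ⊆ range (S.card - 1) ×ˢ range d := by
  intro p hp
  rw [code, mem_image] at hp
  obtain ⟨k, hk, rfl⟩ := hp
  rw [mem_Icc] at hk
  rw [mem_product, mem_range, mem_range]
  have := (par_spec hconn hv hk.1 hk.2).1
  exact ⟨by omega, npos_lt hconn hv hdeg hk.1 hk.2⟩

lemma cand_decode {k : ℕ} (hk1 : 1 ≤ k) (hk : k ≤ S.card - 1) :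
    cand G S (explore G S v (k-1))
      = decSet G v (code G S v) (seqv G S v) k \ explore G S v (k-1) := by
  have h1 : 1 ≤ S.card := card_pos.2 ⟨v, hv⟩
  have hexp : explore G S v (k-1) = (range k).image (seqv G S v) := by
    rw [explore_eq_image, show k - 1 + 1 = k by omega]
  ext w
  simp only [cand, mem_filter, mem_sdiff]
  constructor
  · rintro ⟨⟨hwS, hwA⟩, u, huA, hadj⟩
    obtain ⟨l, hl, rfl⟩ : ∃ l, l < S.card ∧ seqv G S v l = w := by
      have hw : w ∈ explore G S v (S.card - 1) := (explore_eq_S hconn hv).symm ▸ hwS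
      rw [explore_eq_image, mem_image] at hw
      obtain ⟨l, hl, rfl⟩ := hw
      rw [mem_range] at hl
      exact ⟨l, by omega, rfl⟩
    have hkl : k ≤ l := by
      by_contra hc
      push_neg at hc
      exact hwA (hexp ▸ mem_image_of_mem _ (mem_range.2 hc))
    obtain ⟨j, hj, rfl⟩ : ∃ j, j < k ∧ seqv G S v j = u := by
      rw [hexp, mem_image] at huA
      obtain ⟨j, hj, rfl⟩ := huA
      exact ⟨j, mem_range.1 hj, rfl⟩
    have hl1 : 1 ≤ l := by omega
    have hl2 : l ≤ S.card - 1 := by omega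
    have hpar : par G S v l ≤ j := par_min hconn hv hl1 hl2 (by omega) hadj
    have hmemcode : (par G S v l, npos G S v l) ∈ code G S v := by
      rw [code]
      exact mem_image_of_mem _ (mem_Icc.2 ⟨hl1, hl2⟩)
    refine ⟨?_, hwA⟩
    rw [decSet, mem_image]
    refine ⟨(par G S v l, npos G S v l), ?_, decode_id hconn hv hl1 hl2⟩
    rw [mem_filter]
    exact ⟨hmemcode, Nat.lt_of_le_of_lt hpar hj⟩
  · rintro ⟨hwD, hwA⟩
    rw [decSet, mem_image] at hwD
    obtain ⟨p, hp, rfl⟩ := hwD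
    rw [mem_filter] at hp
    obtain ⟨hpc, hplt⟩ := hp
    rw [code, mem_image] at hpc
    obtain ⟨l, hl, rfl⟩ := hpc
    rw [mem_Icc] at hl
    dsimp only at hplt hwA ⊢
    rw [decode_id hconn hv hl.1 hl.2] at hwA ⊢
    have hmemS : seqv G S v l ∈ S := explore_subset hv l (seqv_mem_explore l)
    refine ⟨⟨hmemS, hwA⟩, seqv G S v (par G S v l), ?_, (par_spec hconn hv hl.1 hl.2).2⟩
    rw [hexp]
    exact mem_image_of_mem _ (mem_range.2 hplt)

end Main2

theorem code_inj {S S' : Finset V} (hconn : (G.induce (S : Set V)).Connected)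
    (hconn' : (G.induce (S' : Set V)).Connected) (hv : v ∈ S) (hv' : v ∈ S')
    (hcard : S.card = S'.card) (h : code G S v = code G S' v) : S = S' := by
  have h1 : 1 ≤ S.card := card_pos.2 ⟨v, hv⟩
  have hseq : ∀ k, k < S.card → seqv G S v k = seqv G S' v k := by
    intro k
    induction k using Nat.strong_induction_on with
    | _ k ih =>
      intro hk
      match k with
      | 0 => rfl
      | (k+1) =>
        have hexp : explore G S v k = explore G S' v k := by
          rw [explore_eq_image, explore_eq_image]
          apply image_congr
          intro j hj
          rw [mem_coe, mem_range] at hj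
          exact ih j (by omega) (by omega)
        have hc : cand G S (explore G S v k) = cand G S' (explore G S' v k) := by
          have e1 := cand_decode hconn hv (k := k+1) (by omega) (by omega)
          have e2 := cand_decode hconn' hv' (k := k+1) (by omega) (by omega)
          rw [Nat.add_sub_cancel] at e1 e2
          rw [e1, e2, h, hexp,
            decSet_congr (fun j hj => ih j (by omega) (by omega))]
        show WithTop.untopD v ((cand G S (explore G S v k)).min) = _
        rw [hc]
        rfl
  have e1 : S = (range S.card).image (seqv G S v) := by
    have := explore_eq_S hconn hv
    rw [explore_eq_image, show S.card - 1 + 1 = S.card by omega] at this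
    exact this.symm
  have e2 : S' = (range S.card).image (seqv G S' v) := by
    have := explore_eq_S hconn' hv'
    rw [explore_eq_image, show S'.card - 1 + 1 = S'.card by omega, ← hcard] at this
    exact this.symm
  rw [e1, e2]
  apply image_congr
  intro j hj
  rw [mem_coe, mem_range] at hj
  exact hseq j hj

end Stmt3Aux

lemma Stmt3Aux.choose_le_exp (d k : ℕ) :
    (((k * d).choose k : ℕ) : ℝ) ≤ (Real.exp 1 * d) ^ k := by
  have h1 : (k * d).choose k * k.factorial ≤ (k * d) ^ k := by
    rw [mul_comm ((k * d).choose k), ← Nat.descFactorial_eq_factorial_mul_choose]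
    exact Nat.descFactorial_le_pow _ _
  have hf : (0 : ℝ) < (k.factorial : ℝ) := by
    exact_mod_cast k.factorial_pos
  have h2 : (((k * d).choose k : ℕ) : ℝ) ≤ ((k : ℝ) * d) ^ k / (k.factorial : ℝ) := by
    rw [le_div_iff₀ hf]
    calc (((k * d).choose k : ℕ) : ℝ) * (k.factorial : ℝ)
        = (((k * d).choose k * k.factorial : ℕ) : ℝ) := by push_cast; ring
      _ ≤ (((k * d) ^ k : ℕ) : ℝ) := by exact_mod_cast h1
      _ = ((k : ℝ) * d) ^ k := by push_cast; ring
  have h3 : (k : ℝ) ^ k / (k.factorial : ℝ) ≤ Real.exp 1 ^ k := by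
    have hsum := Real.sum_le_exp_of_nonneg (x := (k : ℝ)) (by positivity) (k + 1)
    have hterm : (k : ℝ) ^ k / (k.factorial : ℝ)
        ≤ ∑ i ∈ range (k + 1), (k : ℝ) ^ i / (i.factorial : ℝ) := by
      exact Finset.single_le_sum (f := fun i => (k : ℝ) ^ i / (i.factorial : ℝ))
        (fun i _ => by positivity) (self_mem_range_succ k)
    calc (k : ℝ) ^ k / (k.factorial : ℝ)
        ≤ Real.exp k := hterm.trans hsum
      _ = Real.exp 1 ^ k := by
          rw [← Real.exp_nat_mul]
          norm_num
  calc (((k * d).choose k : ℕ) : ℝ)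
      ≤ ((k : ℝ) * d) ^ k / (k.factorial : ℝ) := h2
    _ = (d : ℝ) ^ k * ((k : ℝ) ^ k / (k.factorial : ℝ)) := by
        rw [mul_pow]; ring
    _ ≤ (d : ℝ) ^ k * Real.exp 1 ^ k := by
        apply mul_le_mul_of_nonneg_left h3 (by positivity)
    _ = (Real.exp 1 * d) ^ k := by rw [mul_pow]; ring

/-- The number of connected vertex subsets of size `m` containing a fixed vertex `v`
(i.e. subtrees on `m` vertices rooted at `v`) in a graph of maximum degree at most `d`
is at most `(e·d)^(m-1)`. -/
theorem stmt_3 {V : Type*} [Fintype V] [DecidableEq V] (G : SimpleGraph V)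
    [DecidableRel G.Adj] (d : ℕ) (hdeg : ∀ w : V, G.degree w ≤ d)
    (v : V) (m : ℕ) (hm : 1 ≤ m) :
    (({S : Finset V | v ∈ S ∧ S.card = m ∧ (G.induce (S : Set V)).Connected} :
        Set (Finset V)).ncard : ℝ) ≤ (Real.exp 1 * d) ^ (m - 1) := by
  classical
  letI : LinearOrder V := LinearOrder.lift' (fun x => (Fintype.equivFin V x : Fin _))
    (Fintype.equivFin V).injective
  set N : Finset (Finset (ℕ × ℕ)) :=
    (Finset.range (m - 1) ×ˢ Finset.range d).powersetCard (m - 1) with hN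
  have key : ({S : Finset V | v ∈ S ∧ S.card = m ∧ (G.induce (S : Set V)).Connected} :
      Set (Finset V)).ncard ≤ N.card := by
    rw [← Set.ncard_coe_finset N]
    apply Set.ncard_le_ncard_of_injOn (fun S => Stmt3Aux.code G S v)
    · rintro S ⟨hv, hcard, hconn⟩
      rw [Finset.mem_coe, hN, Finset.mem_powersetCard]
      constructor
      · have := Stmt3Aux.code_subset hconn hv hdeg
        rwa [hcard] at this
      · rw [Stmt3Aux.code_card hconn hv, hcard]
    · rintro S ⟨hv, hcard, hconn⟩ S' ⟨hv', hcard', hconn'⟩ h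
      exact Stmt3Aux.code_inj hconn hconn' hv hv' (by rw [hcard, hcard']) h
  have hNcard : N.card = ((m - 1) * d).choose (m - 1) := by
    rw [hN, Finset.card_powersetCard, Finset.card_product, Finset.card_range,
      Finset.card_range]
  calc (({S : Finset V | v ∈ S ∧ S.card = m ∧ (G.induce (S : Set V)).Connected} :
        Set (Finset V)).ncard : ℝ)
      ≤ (N.card : ℝ) := by exact_mod_cast key
    _ = ((((m - 1) * d).choose (m - 1) : ℕ) : ℝ) := by rw [hNcard]
    _ ≤ (Real.exp 1 * d) ^ (m - 1) := Stmt3Aux.choose_le_exp d (m - 1)
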